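/- arXiv:1708.06974 — 2 statements merged into one kernel-verified Lean document; each statement's English description precedes it below -/
import Mathlib

section
/- The map φ restricted to 𝒢₁ is injective, and the image G₁ = φ(𝒢₁) has cardinality (1/2)·q^2·(q−1)·((1/3)q^2 + (5/6)q + 1/2), i.e. |G₁| = q^2(q−1)(2q^2 + 5q + 3)/12. -/
/-- Tuples `(i, j, k, m, n₁, …, n_{q-2})` of nonnegative integers; the coordinate
`n : Fin (q-2) → ℕ` encodes `n_s` via `n_s = n ⟨s-1, _⟩`, i.e. index `t : Fin (q-2)`
corresponds to the paper's index `s = t + 1`. -/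
abbrev GKTup (q : ℕ) := ℕ × ℕ × ℕ × ℕ × (Fin (q - 2) → ℕ)

/-- `φ(i,j,k,m,n₁,…,n_{q-2}) = i q^3 + j + k q + m (q^2+1) + Σ_{s=1}^{q-2} n_s (s+1) q^2 + 1`. -/
def gkPhi (q : ℕ) (t : GKTup q) : ℕ :=
  t.1 * q ^ 3 + t.2.1 + t.2.2.1 * q + t.2.2.2.1 * (q ^ 2 + 1) +
    (∑ s : Fin (q - 2), t.2.2.2.2 s * ((s.1 + 2) * q ^ 2)) + 1

/-- The weight `i + j + k + m q + Σ_{s=1}^{q-2} n_s ((s+1) q - s)`. -/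
def gkWt (q : ℕ) (t : GKTup q) : ℕ :=
  t.1 + t.2.1 + t.2.2.1 + t.2.2.2.1 * q +
    ∑ s : Fin (q - 2), t.2.2.2.2 s * ((s.1 + 2) * q - (s.1 + 1))

/-- The set `𝒢` of tuples with `j ≤ q - 1` and weight at most `q^2 - 2`. -/
def gkCalG (q : ℕ) : Set (GKTup q) :=
  {t | t.2.1 ≤ q - 1 ∧ gkWt q t ≤ q ^ 2 - 2}

/-- The set of gaps `G = φ(𝒢)`. -/
def gkG (q : ℕ) : Set ℕ := gkPhi q '' gkCalG q

/-- `𝒢₁`: tuples in `𝒢` with `j = 0` and all `n_s = 0`. -/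
def gkCalG1 (q : ℕ) : Set (GKTup q) :=
  {t | t ∈ gkCalG q ∧ t.2.1 = 0 ∧ ∀ s, t.2.2.2.2 s = 0}

/-- `𝒢₂`: tuples in `𝒢` with `1 ≤ j ≤ q - 1`, `k ≤ q - 1`, `j + m ≤ q - 1` and all `n_s = 0`. -/
def gkCalG2 (q : ℕ) : Set (GKTup q) :=
  {t | t ∈ gkCalG q ∧ 1 ≤ t.2.1 ∧ t.2.1 ≤ q - 1 ∧ t.2.2.1 ≤ q - 1 ∧
    t.2.1 + t.2.2.2.1 ≤ q - 1 ∧ ∀ s, t.2.2.2.2 s = 0}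

/-- `𝒢₃`: tuples in `𝒢` with `m = 0`, `k ≤ q - 1`, exactly one `n_s = 1` (the other `n`'s
being zero) and `i + k + (s+1) q ≥ q^2 - 1`. -/
def gkCalG3 (q : ℕ) : Set (GKTup q) :=
  {t | t ∈ gkCalG q ∧ t.2.2.2.1 = 0 ∧ t.2.2.1 ≤ q - 1 ∧
    ∃ s : Fin (q - 2), t.2.2.2.2 s = 1 ∧ (∀ s', s' ≠ s → t.2.2.2.2 s' = 0) ∧
      q ^ 2 - 1 ≤ t.1 + t.2.2.1 + (s.1 + 2) * q}


open Finset

lemma gk_gauss1 (n : ℕ) : (∑ r ∈ range n, (r+1)) * 2 = n * (n+1) := by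
  induction n with
  | zero => simp
  | succ n ih => rw [sum_range_succ, add_mul, ih]; ring

lemma gk_gauss2 (n : ℕ) : (∑ r ∈ range n, (r+1)*(r+1)) * 6 = n * (n+1) * (2*n+1) := by
  induction n with
  | zero => simp
  | succ n ih => rw [sum_range_succ, add_mul, ih]; ring

lemma gk_sub1mul (b : ℕ) : (b-1)*b + b = b*b := by
  cases b with
  | zero => simp
  | succ c => simp only [Nat.succ_sub_one]; ring

lemma gk_keySum (a n : ℕ) :
    (∑ r ∈ range n, (a*(r+1)-1)*(a*(r+1))) * 6 + 3*(a*(n*(n+1)))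
      = a*a*(n*(n+1)*(2*n+1)) := by
  have hsum : (∑ r ∈ range n, (a*(r+1)-1)*(a*(r+1))) + ∑ r ∈ range n, a*(r+1)
      = ∑ r ∈ range n, (a*(r+1))*(a*(r+1)) := by
    rw [← Finset.sum_add_distrib]
    exact Finset.sum_congr rfl fun r _ => gk_sub1mul _
  have h1 : ∑ r ∈ range n, a*(r+1) = a * ∑ r ∈ range n, (r+1) := by
    rw [Finset.mul_sum]
  have h2 : ∑ r ∈ range n, (a*(r+1))*(a*(r+1)) = (a*a) * ∑ r ∈ range n, (r+1)*(r+1) := by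
    rw [Finset.mul_sum]; exact Finset.sum_congr rfl fun r _ => by ring
  rw [h1, h2] at hsum
  have h6 := congrArg (· * 6) hsum
  simp only [add_mul] at h6
  have g1 := gk_gauss1 n
  have g2 := gk_gauss2 n
  nlinarith [h6, g1, g2]

lemma gk_euc (q a a' b b' : ℕ) (h1 : a < q) (h2 : a' < q) (h : a + q*b = a' + q*b') :
    a = a' ∧ b = b' := by
  have ha : a = a' := by
    have := congrArg (· % q) h
    simpa [Nat.add_mul_mod_self_left, Nat.mod_eq_of_lt h1, Nat.mod_eq_of_lt h2] using this
  subst ha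
  refine ⟨rfl, ?_⟩
  have hq : 0 < q := lt_of_le_of_lt (Nat.zero_le _) h1
  have : q * b = q * b' := by omega
  exact Nat.eq_of_mul_eq_mul_left hq this

def gkSimplex (c : ℕ) : Finset (ℕ × ℕ) := (range (c+1)).biUnion Finset.HasAntidiagonal.antidiagonal

lemma gk_mem_simplex (c : ℕ) (p : ℕ × ℕ) : p ∈ gkSimplex c ↔ p.1 + p.2 ≤ c := by
  simp only [gkSimplex, Finset.mem_biUnion, Finset.mem_range, Finset.HasAntidiagonal.mem_antidiagonal]
  constructor
  · rintro ⟨s, hs, rfl⟩; omega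
  · intro h; exact ⟨p.1 + p.2, by omega, rfl⟩

lemma gk_simplex_card (c : ℕ) : (gkSimplex c).card * 2 = (c+1)*(c+2) := by
  have hd : ∀ x ∈ range (c+1), ∀ y ∈ range (c+1), x ≠ y →
      Disjoint (Finset.HasAntidiagonal.antidiagonal x) (Finset.HasAntidiagonal.antidiagonal y) := by
    intro x _ y _ hxy
    refine Finset.disjoint_left.2 fun p hp hq => hxy ?_
    rw [Finset.HasAntidiagonal.mem_antidiagonal] at hp hq; omega
  rw [gkSimplex, Finset.card_biUnion hd]
  simp only [Finset.Nat.card_antidiagonal]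
  have := gk_gauss1 (c+1)
  simpa using this

def gkS (q : ℕ) : Finset (ℕ × ℕ × ℕ) :=
  (range q).biUnion fun m => (gkSimplex (q*(q-m)-2)).image fun p => (p.1, p.2, m)

lemma gk_mem_S (q : ℕ) (t : ℕ × ℕ × ℕ) :
    t ∈ gkS q ↔ t.2.2 < q ∧ t.1 + t.2.1 ≤ q*(q-t.2.2) - 2 := by
  obtain ⟨i, k, m⟩ := t
  simp only [gkS, Finset.mem_biUnion, Finset.mem_range, Finset.mem_image]
  constructor
  · rintro ⟨m', hm', p, hp, heq⟩
    obtain ⟨rfl, rfl, rfl⟩ : p.1 = i ∧ p.2 = k ∧ m' = m := by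
      simpa [Prod.ext_iff] using heq
    exact ⟨hm', (gk_mem_simplex _ _).1 hp⟩
  · rintro ⟨hm, h⟩
    exact ⟨m, hm, (i, k), (gk_mem_simplex _ _).2 h, rfl⟩

lemma gk_S_card (q : ℕ) (hq : 2 ≤ q) :
    (gkS q).card * 12 = q ^ 2 * (q - 1) * (2 * q ^ 2 + 5 * q + 3) := by
  have hd : ∀ x ∈ range q, ∀ y ∈ range q, x ≠ y →
      Disjoint ((gkSimplex (q*(q-x)-2)).image fun p => (p.1, p.2, x))
        ((gkSimplex (q*(q-y)-2)).image fun p => (p.1, p.2, y)) := by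
    intro x _ y _ hxy
    refine Finset.disjoint_left.2 fun t ht ht' => hxy ?_
    simp only [Finset.mem_image] at ht ht'
    obtain ⟨p, _, rfl⟩ := ht
    obtain ⟨p', _, h⟩ := ht'
    have := congrArg (·.2.2) h
    simpa using this.symm
  have hcard : (gkS q).card = ∑ m ∈ range q, (gkSimplex (q*(q-m)-2)).card := by
    rw [gkS, Finset.card_biUnion hd]
    refine Finset.sum_congr rfl fun m _ => ?_
    rw [Finset.card_image_of_injective]
    intro p p' h
    simpa [Prod.ext_iff] using h
  -- per-term: for m < q, card * 2 = (q*(q-m)-1)*(q*(q-m))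
  have hterm : ∀ m ∈ range q, (gkSimplex (q*(q-m)-2)).card * 2
      = (q*(q-m)-1)*(q*(q-m)) := by
    intro m hm
    rw [Finset.mem_range] at hm
    have h2 : 2 ≤ q*(q-m) := by
      have h1 : 1 ≤ q - m := by omega
      calc 2 ≤ q := hq
      _ = q * 1 := by ring
      _ ≤ q * (q - m) := Nat.mul_le_mul_left q h1
    have := gk_simplex_card (q*(q-m)-2)
    have e1 : q*(q-m)-2+1 = q*(q-m)-1 := by omega
    have e2 : q*(q-m)-2+2 = q*(q-m) := by omega
    rw [e1, e2] at this
    exact this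
  have hsum2 : (gkS q).card * 2 = ∑ m ∈ range q, (q*(q-m)-1)*(q*(q-m)) := by
    rw [hcard, Finset.sum_mul]
    exact Finset.sum_congr rfl hterm
  -- reindex: q - m = r + 1 with r = q - 1 - m
  have hre : ∑ m ∈ range q, (q*(q-m)-1)*(q*(q-m))
      = ∑ r ∈ range q, (q*(r+1)-1)*(q*(r+1)) := by
    rw [← Finset.sum_range_reflect (fun r => (q*(r+1)-1)*(q*(r+1))) q]
    refine Finset.sum_congr rfl fun m hm => ?_
    rw [Finset.mem_range] at hm
    have : q - 1 - m + 1 = q - m := by omega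
    rw [this]
  have key := gk_keySum q q
  have h12 : (gkS q).card * 12 + 3*(q*(q*(q+1))) = q*q*(q*(q+1)*(2*q+1)) := by
    have e : (gkS q).card * 12 = ((gkS q).card * 2) * 6 := by ring
    rw [e, hsum2, hre]
    exact key
  have hC : q ^ 2 * (q - 1) * (2 * q ^ 2 + 5 * q + 3) + 3*(q*(q*(q+1)))
      = q*q*(q*(q+1)*(2*q+1)) := by
    obtain ⟨p, rfl⟩ : ∃ p, q = p + 2 := ⟨q - 2, by omega⟩
    have : p + 2 - 1 = p + 1 := rfl
    rw [this]; ring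
  exact Nat.add_right_cancel (h12.trans hC.symm)

lemma gk_wt_simp (q : ℕ) (i k m : ℕ) (n : Fin (q-2) → ℕ) (hn : ∀ s, n s = 0) :
    gkWt q (i, 0, k, m, n) = i + k + m * q := by
  unfold gkWt
  simp only
  rw [Finset.sum_eq_zero (fun s _ => by rw [hn s, zero_mul])]
  omega

lemma gk_phi_simp (q : ℕ) (i k m : ℕ) (n : Fin (q-2) → ℕ) (hn : ∀ s, n s = 0) :
    gkPhi q (i, 0, k, m, n) = i * q ^ 3 + k * q + m * (q ^ 2 + 1) + 1 := by
  unfold gkPhi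
  simp only
  rw [Finset.sum_eq_zero (fun s _ => by rw [hn s, zero_mul])]
  omega

lemma gk_mem_G1 (q : ℕ) (hq : 2 ≤ q) (t : GKTup q) :
    t ∈ gkCalG1 q ↔ t.2.1 = 0 ∧ (∀ s, t.2.2.2.2 s = 0) ∧
      t.1 + t.2.2.1 + t.2.2.2.1 * q ≤ q ^ 2 - 2 := by
  obtain ⟨i, j, k, m, n⟩ := t
  constructor
  · rintro ⟨⟨-, hwt⟩, hj, hn⟩
    simp only at hj hn ⊢
    subst hj
    rw [gk_wt_simp q i k m n hn] at hwt
    exact ⟨rfl, hn, hwt⟩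
  · rintro ⟨hj, hn, hwt⟩
    simp only at hj hn hwt
    subst hj
    refine ⟨⟨Nat.zero_le _, ?_⟩, rfl, hn⟩
    rw [gk_wt_simp q i k m n hn]
    exact hwt


/-- `φ` is injective on `𝒢₁`, and `|φ(𝒢₁)| = q^2 (q-1) (2q^2 + 5q + 3) / 12`. -/
theorem gk_card_G1 (q : ℕ) (hq : IsPrimePow q) :
    Set.InjOn (gkPhi q) (gkCalG1 q) ∧
    (gkPhi q '' gkCalG1 q).ncard = q ^ 2 * (q - 1) * (2 * q ^ 2 + 5 * q + 3) / 12 := by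
  have hq2 : 2 ≤ q := hq.two_le
  have hqq : q ^ 2 = q * q := by ring
  have h4 : 2 * 2 ≤ q * q := Nat.mul_le_mul hq2 hq2
  have hinj : Set.InjOn (gkPhi q) (gkCalG1 q) := by
    rintro ⟨i, j, k, m, n⟩ ht ⟨i', j', k', m', n'⟩ ht' h
    rw [gk_mem_G1 q hq2] at ht ht'
    obtain ⟨hj, hn, hwt⟩ := ht
    obtain ⟨hj', hn', hwt'⟩ := ht'
    simp only at hj hn hwt hj' hn' hwt' ⊢
    subst hj; subst hj'
    rw [gk_phi_simp q i k m n hn, gk_phi_simp q i' k' m' n' hn'] at h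
    -- rearrange
    have e : ∀ a b c : ℕ, a * q ^ 3 + b * q + c * (q ^ 2 + 1) + 1
        = c + q * ((b + c * q) + q ^ 2 * a) + 1 := by intros; ring
    rw [e i k m, e i' k' m'] at h
    have hm : m < q := by
      rcases Nat.lt_or_ge m q with h' | h'
      · exact h'
      · exfalso
        have : q * q ≤ m * q := Nat.mul_le_mul_right q h'
        omega
    have hm' : m' < q := by
      rcases Nat.lt_or_ge m' q with h' | h'
      · exact h'
      · exfalso
        have : q * q ≤ m' * q := Nat.mul_le_mul_right q h'
        omega
    obtain ⟨hm_eq, hB⟩ := gk_euc q m m' (k + m * q + q ^ 2 * i) (k' + m' * q + q ^ 2 * i') hm hm' (by omega)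
    subst hm_eq
    have hkm : k + m * q < q ^ 2 := by omega
    have hkm' : k' + m * q < q ^ 2 := by omega
    have hq2pos : 0 < q ^ 2 := by positivity
    obtain ⟨hk_eq, hi_eq⟩ := gk_euc (q ^ 2) (k + m * q) (k' + m * q) i i'
      (by omega) (by omega) hB
    have hk : k = k' := by omega
    have hnn : n = n' := by
      funext s
      rw [hn s, hn' s]
    subst hi_eq; subst hk; subst hnn
    rfl
  refine ⟨hinj, ?_⟩
  -- the image finset
  have hG1 : gkCalG1 q
      = ↑((gkS q).image (fun p : ℕ × ℕ × ℕ => ((p.1, 0, p.2.1, p.2.2, fun _ => 0) : GKTup q))) := by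
    ext t
    rw [gk_mem_G1 q hq2]
    simp only [Finset.coe_image, Set.mem_image, Finset.mem_coe]
    constructor
    · rintro ⟨hj, hn, hwt⟩
      obtain ⟨i, j, k, m, n⟩ := t
      simp only at hj hn hwt
      subst hj
      refine ⟨(i, k, m), ?_, ?_⟩
      · rw [gk_mem_S]
        simp only
        have hm : m < q := by
          rcases Nat.lt_or_ge m q with h' | h'
          · exact h'
          · exfalso
            have : q * q ≤ m * q := Nat.mul_le_mul_right q h'
            omega
        refine ⟨hm, ?_⟩
        have hsplit : q * (q - m) + q * m = q * q := by
          rw [← Nat.mul_add]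
          congr 1
          omega
        have hmq : m * q = q * m := Nat.mul_comm m q
        omega
      · simp only [Prod.mk.injEq, and_true, true_and]
        exact funext fun s => (hn s).symm
    · rintro ⟨⟨i, k, m⟩, hmem, rfl⟩
      rw [gk_mem_S] at hmem
      simp only at hmem
      obtain ⟨hm, hik⟩ := hmem
      refine ⟨rfl, fun s => rfl, ?_⟩
      show i + k + m * q ≤ q ^ 2 - 2
      have hsplit : q * (q - m) + q * m = q * q := by
        rw [← Nat.mul_add]
        congr 1
        omega
      have h2 : 2 ≤ q * (q - m) := by
        calc 2 ≤ q := hq2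
        _ = q * 1 := by ring
        _ ≤ q * (q - m) := Nat.mul_le_mul_left q (by omega)
      have hmq : m * q = q * m := Nat.mul_comm m q
      omega
  rw [Set.ncard_image_of_injOn hinj, hG1, Set.ncard_coe_finset]
  -- the image map is injective
  have hcard : ((gkS q).image
      (fun p : ℕ × ℕ × ℕ => ((p.1, 0, p.2.1, p.2.2, fun _ => 0) : GKTup q))).card
      = (gkS q).card := by
    rw [Finset.card_image_of_injective]
    rintro ⟨a, b, c⟩ ⟨a', b', c'⟩ h
    have h1 := congrArg (·.1) h
    have h2 := congrArg (·.2.2.1) h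
    have h3 := congrArg (·.2.2.2.1) h
    simp only at h1 h2 h3
    exact Prod.ext h1 (Prod.ext h2 h3)
  rw [hcard]
  have := gk_S_card q hq2
  omega
end

section
/- The map φ restricted to 𝒢₃ is injective, and the image G₃ = φ(𝒢₃) has cardinality (1/2)·q^2·(q−1)·((1/3)q − 2/3), i.e. |G₃| = q^2(q−1)(q−2)/6. -/
def gkNfun {q : ℕ} (s : Fin (q - 2)) : Fin (q - 2) → ℕ := fun s' => if s' = s then 1 else 0

lemma gkNfun_self {q : ℕ} (s : Fin (q - 2)) : gkNfun s s = 1 := if_pos rfl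

lemma gkNfun_ne {q : ℕ} {s s' : Fin (q - 2)} (h : s' ≠ s) : gkNfun s s' = 0 := if_neg h

lemma gkNfun_inj {q : ℕ} {s s' : Fin (q - 2)} (h : gkNfun s = gkNfun s') : s = s' := by
  by_contra hne
  have h1 := congrFun h s
  rw [gkNfun_self, gkNfun_ne (fun hh => hne hh)] at h1
  exact one_ne_zero h1

lemma gk_sum_eq {N : ℕ} {n : Fin N → ℕ} {s : Fin N} (h1 : n s = 1)
    (h0 : ∀ s', s' ≠ s → n s' = 0) (c : Fin N → ℕ) :
    ∑ x : Fin N, n x * c x = c s := by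
  rw [Finset.sum_eq_single s]
  · rw [h1, one_mul]
  · intro b _ hb; rw [h0 b hb, zero_mul]
  · intro hs; exact absurd (Finset.mem_univ s) hs

lemma gk_dig1 {q r s a b : ℕ} (hr : r < q) (hs : s < q) (h : r + a * q = s + b * q) :
    r = s ∧ a = b := by
  have hq : 0 < q := by omega
  have h1 : r = s := by
    have h2 := congrArg (· % q) h
    simpa [Nat.add_mul_mod_self_right, Nat.mod_eq_of_lt hr, Nat.mod_eq_of_lt hs] using h2
  subst h1
  exact ⟨rfl, Nat.eq_of_mul_eq_mul_right hq (Nat.add_left_cancel h)⟩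

lemma gk_digits {q j k c i j' k' c' i' : ℕ} (hj : j < q) (hk : k < q) (hc : c < q)
    (hj' : j' < q) (hk' : k' < q) (hc' : c' < q)
    (h : j + k * q + c * q ^ 2 + i * q ^ 3 = j' + k' * q + c' * q ^ 2 + i' * q ^ 3) :
    j = j' ∧ k = k' ∧ c = c' ∧ i = i' := by
  have e : ∀ x y z w : ℕ, x + y * q + z * q ^ 2 + w * q ^ 3 = x + (y + (z + w * q) * q) * q := by
    intros; ring
  rw [e, e] at h
  obtain ⟨h1, h2⟩ := gk_dig1 hj hj' h
  obtain ⟨h3, h4⟩ := gk_dig1 hk hk' h2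
  obtain ⟨h5, h6⟩ := gk_dig1 hc hc' h4
  exact ⟨h1, h3, h5, h6⟩

lemma gk_injOn (q : ℕ) : Set.InjOn (gkPhi q) (gkCalG3 q) := by
  rintro ⟨i, j, k, m, n⟩ ⟨⟨hj, hwt⟩, hm, hk, s, hn1, hn0, hik⟩
    ⟨i', j', k', m', n'⟩ ⟨⟨hj', hwt'⟩, hm', hk', s', hn1', hn0', hik'⟩ hφ
  simp only at hm hm' hk hk' hj hj' hn1 hn0 hn1' hn0' hik hik'
  subst hm; subst hm'
  have hq3 : 3 ≤ q := by have := s.isLt; omega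
  have hsum := gk_sum_eq hn1 hn0 (fun x : Fin (q - 2) => (x.1 + 2) * q ^ 2)
  have hsum' := gk_sum_eq hn1' hn0' (fun x : Fin (q - 2) => (x.1 + 2) * q ^ 2)
  simp only [gkPhi] at hφ
  rw [hsum, hsum'] at hφ
  have h : j + k * q + (s.1 + 2) * q ^ 2 + i * q ^ 3
      = j' + k' * q + (s'.1 + 2) * q ^ 2 + i' * q ^ 3 := by linarith
  obtain ⟨e1, e2, e3, e4⟩ := gk_digits (by omega) (by omega) (by have := s.isLt; omega)
    (by omega) (by omega) (by have := s'.isLt; omega) h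
  have hss : s = s' := Fin.ext (by omega)
  subst hss
  have hn : n = n' := by
    funext x
    by_cases hx : x = s
    · subst hx; rw [hn1, hn1']
    · rw [hn0 x hx, hn0' x hx]
  simp [e1, e2, e4, hn]

def gkT (q : ℕ) : Finset (Fin (q - 2) × ℕ × ℕ × ℕ) :=
  (Finset.univ ×ˢ Finset.range q ×ˢ Finset.range q ×ˢ Finset.range q).filter
    (fun p => p.2.1 + p.2.2.1 ≤ p.1.1)

lemma gkT_mem {q : ℕ} {s : Fin (q - 2)} {u j k : ℕ} :
    (s, u, j, k) ∈ gkT q ↔ u < q ∧ j < q ∧ k < q ∧ u + j ≤ s.1 := by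
  simp only [gkT, Finset.mem_filter, Finset.mem_product, Finset.mem_univ, Finset.mem_range,
    true_and]
  tauto

def gkPsi (q : ℕ) (p : Fin (q - 2) × ℕ × ℕ × ℕ) : GKTup q :=
  (q ^ 2 - 1 - (p.1.1 + 2) * q - p.2.2.2 + p.2.1, p.2.2.1, p.2.2.2, 0, gkNfun p.1)

lemma gk_facts {q : ℕ} (s : Fin (q - 2)) :
    (s.1 + 2) * q + q ≤ q ^ 2 ∧ 2 * s.1 + 4 ≤ (s.1 + 2) * q ∧ 3 ≤ q := by
  have ha : s.1 < q - 2 := s.isLt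
  have h3 : 3 ≤ q := by omega
  refine ⟨?_, ?_, h3⟩
  · calc (s.1 + 2) * q + q = (s.1 + 3) * q := by ring
      _ ≤ q * q := Nat.mul_le_mul_right q (by omega)
      _ = q ^ 2 := (sq q).symm
  · calc 2 * s.1 + 4 = (s.1 + 2) * 2 := by ring
      _ ≤ (s.1 + 2) * q := Nat.mul_le_mul_left _ (by omega)

lemma gk_psi_injOn (q : ℕ) : Set.InjOn (gkPsi q) ↑(gkT q) := by
  rintro ⟨s, u, j, k⟩ hp ⟨s', u', j', k'⟩ hp' h
  simp only [Finset.mem_coe, gkT_mem] at hp hp'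
  obtain ⟨hu, hj, hk, huj⟩ := hp
  obtain ⟨hu', hj', hk', huj'⟩ := hp'
  simp only [gkPsi, Prod.mk.injEq] at h
  obtain ⟨h1, h2, h3, -, h5⟩ := h
  have hss : s = s' := gkNfun_inj h5
  subst hss; subst h2; subst h3
  obtain ⟨hf1, hf2, hf3⟩ := gk_facts s
  have huu : u = u' := by
    generalize hP : (s.1 + 2) * q = P at *
    generalize hQ : q ^ 2 = Q at *
    omega
  rw [huu]

lemma gkCalG3_eq (q : ℕ) : gkCalG3 q = ↑((gkT q).image (gkPsi q)) := by
  ext t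
  obtain ⟨i, j, k, m, n⟩ := t
  simp only [Finset.coe_image, Set.mem_image, Finset.mem_coe]
  constructor
  · intro h
    obtain ⟨⟨hj, hwt⟩, hm, hk, s, hn1, hn0, hik⟩ := h
    simp only at hj hm hk hn1 hn0 hik
    subst hm
    obtain ⟨hf1, hf2, hf3⟩ := gk_facts s
    have ha : s.1 < q - 2 := s.isLt
    have hwt' : i + j + k + 0 * q + ((s.1 + 2) * q - (s.1 + 1)) ≤ q ^ 2 - 2 := by
      have hs := gk_sum_eq hn1 hn0 (fun x : Fin (q - 2) => (x.1 + 2) * q - (x.1 + 1))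
      simp only [gkWt] at hwt
      rw [hs] at hwt
      exact hwt
    refine ⟨(s, i + k + (s.1 + 2) * q + 1 - q ^ 2, j, k), ?_, ?_⟩
    · rw [gkT_mem]
      generalize hP : (s.1 + 2) * q = P at *
      generalize hQ : q ^ 2 = Q at *
      refine ⟨by omega, by omega, by omega, by omega⟩
    · have hn : gkNfun s = n := by
        funext x
        by_cases hx : x = s
        · subst hx; rw [gkNfun_self, hn1]
        · rw [gkNfun_ne hx, hn0 x hx]
      have hieq : q ^ 2 - 1 - (s.1 + 2) * q - k + (i + k + (s.1 + 2) * q + 1 - q ^ 2) = i := by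
        generalize hP : (s.1 + 2) * q = P at *
        generalize hQ : q ^ 2 = Q at *
        omega
      simp only [gkPsi]
      rw [hieq, hn]
  · rintro ⟨⟨s, u, j, k⟩, hpT, hpe⟩
    rw [gkT_mem] at hpT
    obtain ⟨hu, hjq, hkq, huj⟩ := hpT
    obtain ⟨hf1, hf2, hf3⟩ := gk_facts s
    have ha : s.1 < q - 2 := s.isLt
    simp only [gkPsi, Prod.mk.injEq] at hpe
    obtain ⟨hi, hj, hk, hm, hn⟩ := hpe
    subst hi; subst hj; subst hk; subst hm; subst hn
    refine ⟨⟨?_, ?_⟩, rfl, ?_, s, gkNfun_self s, fun s' h' => gkNfun_ne h', ?_⟩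
    · show j ≤ q - 1
      omega
    · show gkWt q _ ≤ q ^ 2 - 2
      simp only [gkWt]
      rw [gk_sum_eq (gkNfun_self s) (fun s' h' => gkNfun_ne h')
        (fun x : Fin (q - 2) => (x.1 + 2) * q - (x.1 + 1))]
      generalize hP : (s.1 + 2) * q = P at *
      generalize hQ : q ^ 2 = Q at *
      omega
    · show k ≤ q - 1
      omega
    · show q ^ 2 - 1 ≤ (q ^ 2 - 1 - (s.1 + 2) * q - k + u) + k + (s.1 + 2) * q
      generalize hP : (s.1 + 2) * q = P at *
      generalize hQ : q ^ 2 = Q at *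
      omega

lemma gk_inner (q a : ℕ) (ha : a < q) :
    2 * ∑ u ∈ Finset.range q, (a + 1 - u) = (a + 1) * (a + 2) := by
  have h1 : ∑ u ∈ Finset.range (a + 1), (a + 1 - u) = ∑ u ∈ Finset.range q, (a + 1 - u) := by
    apply Finset.sum_subset (Finset.range_subset_range.mpr (by omega))
    intro x _ hx2
    simp only [Finset.mem_range] at hx2
    omega
  have h2 : ∑ u ∈ Finset.range (a + 1), (a + 1 - u) = ∑ u ∈ Finset.range (a + 1), (u + 1) := by
    have hr := Finset.sum_range_reflect (fun u => u + 1) (a + 1)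
    rw [← hr]
    apply Finset.sum_congr rfl
    intro x hx
    simp only [Finset.mem_range] at hx
    omega
  have h3 : ∑ u ∈ Finset.range (a + 1), (u + 1) = ∑ u ∈ Finset.range (a + 2), u := by
    rw [Finset.sum_range_succ' (fun u => u) (a + 1)]
    simp
  have h4 := Finset.sum_range_id_mul_two (a + 2)
  calc 2 * ∑ u ∈ Finset.range q, (a + 1 - u)
      = (∑ i ∈ Finset.range (a + 2), i) * 2 := by rw [← h1, h2, h3]; ring
    _ = (a + 2) * (a + 2 - 1) := h4
    _ = (a + 1) * (a + 2) := by rw [show a + 2 - 1 = a + 1 by omega]; ring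

lemma gk_cube (n : ℕ) : 3 * ∑ a ∈ Finset.range n, (a + 1) * (a + 2) = n * (n + 1) * (n + 2) := by
  induction n with
  | zero => simp
  | succ n ih =>
    rw [Finset.sum_range_succ, Nat.mul_add, ih]
    ring

lemma gkT_card (q : ℕ) (hq : 2 ≤ q) : (gkT q).card * 6 = q ^ 2 * (q - 1) * (q - 2) := by
  have hcard : (gkT q).card
      = ∑ s : Fin (q - 2), ∑ u ∈ Finset.range q, ∑ j ∈ Finset.range q,
          ∑ k ∈ Finset.range q, if u + j ≤ s.1 then 1 else 0 := by
    rw [gkT, Finset.card_filter]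
    simp only [Finset.sum_product]
  have step1 : ∀ a : ℕ, a < q →
      (∑ u ∈ Finset.range q, ∑ j ∈ Finset.range q, ∑ k ∈ Finset.range q,
        if u + j ≤ a then (1 : ℕ) else 0) = q * ∑ u ∈ Finset.range q, (a + 1 - u) := by
    intro a ha
    have hj : ∀ u : ℕ, (∑ j ∈ Finset.range q, if u + j ≤ a then (1 : ℕ) else 0) = a + 1 - u := by
      intro u
      rw [← Finset.card_filter]
      have hf : Finset.filter (fun j => u + j ≤ a) (Finset.range q) = Finset.range (a + 1 - u) := by
        ext x
        simp only [Finset.mem_filter, Finset.mem_range]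
        omega
      rw [hf, Finset.card_range]
    calc (∑ u ∈ Finset.range q, ∑ j ∈ Finset.range q, ∑ k ∈ Finset.range q,
          if u + j ≤ a then (1 : ℕ) else 0)
        = ∑ u ∈ Finset.range q, ∑ j ∈ Finset.range q, q * (if u + j ≤ a then (1:ℕ) else 0) := by
          apply Finset.sum_congr rfl; intro u _
          apply Finset.sum_congr rfl; intro j _
          rw [Finset.sum_const, Finset.card_range, smul_eq_mul]
      _ = ∑ u ∈ Finset.range q, q * (a + 1 - u) := by
          apply Finset.sum_congr rfl; intro u _
          rw [← Finset.mul_sum, hj u]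
      _ = q * ∑ u ∈ Finset.range q, (a + 1 - u) := (Finset.mul_sum _ _ _).symm
  have h2 : (gkT q).card = ∑ a ∈ Finset.range (q - 2), q * ∑ u ∈ Finset.range q, (a + 1 - u) := by
    rw [hcard, ← Fin.sum_univ_eq_sum_range (fun a => q * ∑ u ∈ Finset.range q, (a + 1 - u)) (q - 2)]
    apply Finset.sum_congr rfl
    intro s _
    exact step1 s.1 (by have := s.isLt; omega)
  have h3 : (gkT q).card * 6 = q * (3 * ∑ a ∈ Finset.range (q - 2), (a + 1) * (a + 2)) := by
    rw [h2, Finset.sum_mul, Finset.mul_sum, Finset.mul_sum]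
    apply Finset.sum_congr rfl
    intro a _
    have hi := gk_inner q a (by simp only [Finset.mem_range] at *; omega)
    calc (q * ∑ u ∈ Finset.range q, (a + 1 - u)) * 6
        = q * (3 * (2 * ∑ u ∈ Finset.range q, (a + 1 - u))) := by ring
      _ = q * (3 * ((a + 1) * (a + 2))) := by rw [hi]
  rw [h3, gk_cube, show q - 2 + 1 = q - 1 by omega, show q - 2 + 2 = q by omega]
  ring

/-- `φ` is injective on `𝒢₃`, and `|φ(𝒢₃)| = q^2 (q-1) (q-2) / 6`. -/
theorem gk_card_G3 (q : ℕ) (hq : IsPrimePow q) :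
    Set.InjOn (gkPhi q) (gkCalG3 q) ∧
    (gkPhi q '' gkCalG3 q).ncard = q ^ 2 * (q - 1) * (q - 2) / 6 := by
  have hq2 : 2 ≤ q := hq.two_le
  refine ⟨gk_injOn q, ?_⟩
  rw [Set.ncard_image_of_injOn (gk_injOn q), gkCalG3_eq q, Set.ncard_coe_finset,
    Finset.card_image_of_injOn (gk_psi_injOn q)]
  exact (Nat.div_eq_of_eq_mul_left (by norm_num) (gkT_card q hq2).symm).symm
end
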